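/- For every $N \in \mathbb{N}_+$ there exists a Borel measurable map $\mathsf{M}_N : [0,1]^N \to [0,1]^{\mathbb{N}_+}$ such that: (1) the first $N$ entries of $\mathsf{M}_N(s_1,\dots,s_N)$ equal $(s_1,\dots,s_N)$; and (2) whenever $(s_1,\dots,s_N)$ is the initial segment of a strictly decreasing sequence of positive reals summing to $1$, the sequence $\mathsf{M}_N(s_1,\dots,s_N)$ is itself a strictly decreasing sequence of positive reals summing to $1$. -/
import Mathlib

noncomputable def auxr (n : ℕ) (s : Fin (n+1) → Set.Icc (0:ℝ) 1) : ℝ :=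
  if 1 - ∑ i, (s i : ℝ) ≤ (s (Fin.last n) : ℝ) then 1/2
  else 1 - (s (Fin.last n) : ℝ) / (2 * (1 - ∑ i, (s i : ℝ)))

noncomputable def auxM (n : ℕ) (s : Fin (n+1) → Set.Icc (0:ℝ) 1) : ℕ → ℝ := fun j =>
  if hj : j < n+1 then (s ⟨j, hj⟩ : ℝ)
  else (1 - ∑ i, (s i : ℝ)) * (1 - auxr n s) * (auxr n s) ^ (j - (n+1))

lemma auxr_meas (n : ℕ) : Measurable (auxr n) := by
  unfold auxr
  have hS : Measurable fun s : Fin (n+1) → Set.Icc (0:ℝ) 1 => ∑ i, (s i : ℝ) :=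
    Finset.measurable_sum _ (fun i _ => measurable_subtype_coe.comp (measurable_pi_apply i))
  have hL : Measurable fun s : Fin (n+1) → Set.Icc (0:ℝ) 1 => (s (Fin.last n) : ℝ) :=
    measurable_subtype_coe.comp (measurable_pi_apply _)
  exact Measurable.ite (measurableSet_le (measurable_const.sub hS) hL) measurable_const
    (measurable_const.sub (hL.div ((measurable_const.mul (measurable_const.sub hS)))))

lemma auxM_meas (n : ℕ) (j : ℕ) : Measurable (fun s => auxM n s j) := by
  unfold auxM
  split
  · exact measurable_subtype_coe.comp (measurable_pi_apply _)
  · have hS : Measurable fun s : Fin (n+1) → Set.Icc (0:ℝ) 1 => ∑ i, (s i : ℝ) :=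
      Finset.measurable_sum _ (fun i _ => measurable_subtype_coe.comp (measurable_pi_apply i))
    exact ((measurable_const.sub hS).mul (measurable_const.sub (auxr_meas n))).mul
      ((auxr_meas n).pow_const _)

/-- For every `N ≥ 1` there is a Borel measurable map `M_N : [0,1]^N → [0,1]^ℕ` preserving
the first `N` entries and sending every initial segment of a strictly decreasing positive
sequence summing to `1` to a strictly decreasing positive sequence summing to `1`. -/
theorem stmt4 (N : ℕ) (hN : 0 < N) :
    ∃ M : (Fin N → Set.Icc (0:ℝ) 1) → (ℕ → Set.Icc (0:ℝ) 1),
      Measurable M ∧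
      (∀ s : Fin N → Set.Icc (0:ℝ) 1, ∀ i : Fin N, (M s (i : ℕ) : ℝ) = (s i : ℝ)) ∧
      (∀ s : Fin N → Set.Icc (0:ℝ) 1,
        (∃ t : ℕ → ℝ, StrictAnti t ∧ (∀ j, 0 < t j) ∧ (∑' j, t j) = 1 ∧
          ∀ i : Fin N, t (i : ℕ) = (s i : ℝ)) →
        StrictAnti (fun j => (M s j : ℝ)) ∧ (∀ j, 0 < (M s j : ℝ)) ∧
          (∑' j, (M s j : ℝ)) = 1) := by
  obtain ⟨n, rfl⟩ : ∃ n, N = n+1 := ⟨N-1, by omega⟩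
  refine ⟨fun s j => ⟨min 1 (max 0 (auxM n s j)),
    le_min zero_le_one (le_max_left 0 _), min_le_left _ _⟩, ?_, ?_, ?_⟩
  · rw [measurable_pi_iff]
    intro j
    exact (measurable_const.min (measurable_const.max (auxM_meas n j))).subtype_mk
  · intro s i
    simp only [auxM, i.isLt, dif_pos]
    rw [Fin.eta, max_eq_right (s i).2.1, min_eq_right (s i).2.2]
  · rintro s ⟨t, ht_anti, ht_pos, ht_sum, ht_eq⟩
    have hts : Summable t := by
      by_contra h
      rw [tsum_eq_zero_of_not_summable h] at ht_sum; norm_num at ht_sum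
    set S : ℝ := ∑ i, (s i : ℝ) with hSdef
    set R : ℝ := 1 - S with hRdef
    have hSr : S = ∑ i ∈ Finset.range (n+1), t i := by
      rw [← Fin.sum_univ_eq_sum_range]
      exact Finset.sum_congr rfl (fun i _ => (ht_eq i).symm)
    have htail : Summable fun i => t (i + (n+1)) := (summable_nat_add_iff _).mpr hts
    have hR : R = ∑' i, t (i + (n+1)) := by
      have := Summable.sum_add_tsum_nat_add (f := t) (n+1) hts
      rw [ht_sum] at this
      rw [hRdef, hSr]; linarith
    have hRpos : 0 < R := by
      rw [hR]
      exact Summable.tsum_pos htail (fun i => (ht_pos _).le) 0 (ht_pos _)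
    set sN : ℝ := (s (Fin.last n) : ℝ) with hsNdef
    have hsN : sN = t n := by rw [hsNdef, ← ht_eq (Fin.last n)]; rfl
    have hsNpos : 0 < sN := hsN ▸ ht_pos n
    set r : ℝ := auxr n s with hrdef
    have hr01 : 0 < r ∧ r < 1 ∧ R * (1 - r) < sN := by
      rw [hrdef, auxr]
      split
      · rename_i h
        refine ⟨by norm_num, by norm_num, ?_⟩
        have : R ≤ sN := h
        nlinarith
      · rename_i h
        push_neg at h
        have h' : sN < R := h
        have h2R : 0 < 2 * R := by linarith
        have hfrac : sN / (2 * R) < 1/2 := by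
          rw [div_lt_iff₀ h2R]; nlinarith
        have hfracpos : 0 < sN / (2 * R) := div_pos hsNpos h2R
        refine ⟨by linarith, by linarith, ?_⟩
        have : R * (1 - (1 - sN / (2 * R))) = sN / 2 := by
          field_simp; ring
        rw [this]; linarith
    obtain ⟨hr0, hr1, hjump⟩ := hr01
    have hC : 0 < R * (1 - r) := mul_pos hRpos (by linarith)
    have hpos : ∀ j, 0 < auxM n s j := by
      intro j
      rw [auxM]
      split
      · rename_i hj
        rw [← ht_eq ⟨j, hj⟩]; exact ht_pos j
      · exact mul_pos hC (pow_pos hr0 _)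
    have hle1 : ∀ j, auxM n s j ≤ 1 := by
      intro j
      rw [auxM]
      split
      · exact (s _).2.2
      · have h1 : (1 - S) * (1 - r) * r ^ (j - (n+1)) ≤ R * (1 - r) * 1 := by
          apply mul_le_mul_of_nonneg_left _ hC.le
          exact pow_le_one₀ hr0.le hr1.le
        have hsn1 : sN ≤ 1 := (s _).2.2
        calc (1 - S) * (1 - r) * r ^ (j - (n+1)) ≤ R * (1 - r) * 1 := h1
          _ = R * (1 - r) := by ring
          _ ≤ 1 := by linarith
    have hMeq : ∀ j, min 1 (max 0 (auxM n s j)) = auxM n s j := by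
      intro j
      rw [max_eq_right (hpos j).le, min_eq_right (hle1 j)]
    simp only [hMeq]
    refine ⟨?_, hpos, ?_⟩
    · apply strictAnti_nat_of_succ_lt
      intro k
      rcases lt_trichotomy (k+1) (n+1) with hk | hk | hk
      · rw [auxM, auxM, dif_pos hk, dif_pos (by omega : k < n+1),
          ← ht_eq ⟨k+1, hk⟩, ← ht_eq ⟨k, by omega⟩]
        exact ht_anti (lt_add_one k)
      · have hkn : k = n := by omega
        subst hkn
        rw [auxM, auxM, dif_neg (by omega), dif_pos (by omega : k < k+1)]
        have hkl : (⟨k, Nat.lt_succ_self k⟩ : Fin (k+1)) = Fin.last k := rfl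
        rw [hkl]
        simpa using hjump
      · rw [auxM, auxM, dif_neg (by omega), dif_neg (by omega)]
        have : k + 1 - (n+1) = (k - (n+1)) + 1 := by omega
        rw [this]
        have hp : r ^ ((k - (n+1)) + 1) < r ^ (k - (n+1)) :=
          pow_lt_pow_right_of_lt_one₀ hr0 hr1 (lt_add_one _)
        exact mul_lt_mul_of_pos_left hp hC
    · have hgeo : Summable fun i => R * (1 - r) * r ^ i :=
        (summable_geometric_of_lt_one hr0.le hr1).mul_left _
      have htailf : ∀ i, auxM n s (i + (n+1)) = R * (1 - r) * r ^ i := by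
        intro i
        rw [auxM, dif_neg (by omega)]
        congr 2
        omega
      have hsum : Summable (auxM n s) := by
        rw [← summable_nat_add_iff (n+1)]
        exact hgeo.congr (fun i => (htailf i).symm)
      have := Summable.sum_add_tsum_nat_add (f := auxM n s) (n+1) hsum
      rw [tsum_congr htailf, tsum_mul_left, tsum_geometric_of_lt_one hr0.le hr1] at this
      have hhead : ∑ i ∈ Finset.range (n+1), auxM n s i = S := by
        rw [hSdef, ← Fin.sum_univ_eq_sum_range (fun i => auxM n s i)]
        apply Finset.sum_congr rfl
        intro i _
        rw [auxM, dif_pos i.isLt, Fin.eta]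
      rw [← this, hhead]
      have h1r : (1 - r) ≠ 0 := by linarith
      field_simp
      rw [hRdef]; ring
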